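/- Let Ω ⊂ P(ℝ^d) be a properly convex domain and γ ∈ Aut(Ω) a bi-proximal element such that the projectivized kernel of T_γ := lim γⁿ (in P(End(ℝ^d))) meets the closure of Ω only in the point ℓ⁻_γ. Then γ has 'north–south dynamics': for all neighborhoods A of ℓ⁺_γ and B of ℓ⁻_γ in closure(Ω), there exists N such that for all n ≥ N, γⁿ(closure(Ω) \ B) ⊂ A and γ^{-n}(closure(Ω) \ A) ⊂ B. -/

import Mathlib

open Matrix Topology Filter
open scoped MatrixGroups

noncomputable section

abbrev Vd (d : ℕ) := Fin d → ℝ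
abbrev Md (d : ℕ) := Matrix (Fin d) (Fin d) ℝ

open scoped Classical in
/-- The multiset of absolute values of the complex eigenvalues (roots of the
characteristic polynomial over `ℂ`, with multiplicity) of a real `d × d` matrix. -/
def eigMods {d : ℕ} (g : Md d) : Multiset ℝ :=
  ((g.charpoly.map (algebraMap ℝ ℂ)).roots).map (fun z => ‖z‖)

open scoped Classical in
/-- `g` is proximal: the largest modulus of an eigenvalue is attained exactly once. -/
def IsProximal {d : ℕ} (g : Md d) : Prop :=
  ∃ r ∈ eigMods g, (eigMods g).count r = 1 ∧ ∀ s ∈ eigMods g, s ≤ r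

/-- `ℓ` is the attracting eigenline of `g`: the eigenspace of a real eigenvalue of
maximal modulus, of dimension one. -/
def IsTopEigenline {d : ℕ} (g : Md d) (ℓ : Submodule ℝ (Vd d)) : Prop :=
  ∃ μ : ℝ, (∀ s ∈ eigMods g, s ≤ |μ|) ∧
    ℓ = Module.End.eigenspace (Matrix.toLin' g) μ ∧ Module.finrank ℝ ℓ = 1

/-- `C` is the cone over a properly convex domain `Ω ⊂ P(ℝ^d)`: an open convex
cone, nonempty, whose closure contains no line (salient). -/
def IsProperCone {d : ℕ} (C : Set (Vd d)) : Prop :=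
  IsOpen C ∧ Convex ℝ C ∧ C.Nonempty ∧
    (∀ v ∈ C, ∀ t : ℝ, 0 < t → t • v ∈ C) ∧
    (∀ v ∈ closure C, -v ∈ closure C → v = 0)

/-- `g` induces an automorphism of the properly convex domain with cone `C`. -/
def ConeAut {d : ℕ} (C : Set (Vd d)) (g : Md d) : Prop :=
  IsUnit g ∧ (fun v => g.mulVec v) '' C = C

/-- Gauge `M(u/v) = inf{t > 0 : t v - u ∈ closure C}`. -/
def gaugeM {d : ℕ} (C : Set (Vd d)) (u v : Vd d) : ℝ :=
  sInf {t : ℝ | 0 < t ∧ t • v - u ∈ closure C}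

/-- The Hilbert distance between the projective points `[u]`, `[v]` of the properly
convex domain with cone `C` : `H([u],[v]) = (1/2) log (M(u/v) M(v/u))`. -/
def hilbertDist {d : ℕ} (C : Set (Vd d)) (u v : Vd d) : ℝ :=
  (1/2) * Real.log (gaugeM C u v * gaugeM C v u)

/-- The closed projective segment `[[u],[v]]` is contained in `∂Ω`. -/
def BSeg {d : ℕ} (C : Set (Vd d)) (u v : Vd d) : Prop :=
  ∀ s t : ℝ, 0 ≤ s → 0 ≤ t → s • u + t • v ∉ C

/-- `[v]` belongs to the open face `F_Ω([u])`: either `[v] = [u]`, or some open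
projective segment contained in `closure Ω` contains both `[u]` and `[v]`. -/
def InFace {d : ℕ} (C : Set (Vd d)) (u v : Vd d) : Prop :=
  v ∈ closure C ∧ ((∃ t : ℝ, 0 < t ∧ v = t • u) ∨
    ∃ ε : ℝ, 0 < ε ∧ u - ε • v ∈ closure C ∧ v - ε • u ∈ closure C)

/-- `[v]` is an extreme point of `closure Ω`: it is not in the interior of any
nondegenerate projective segment contained in `closure Ω`. -/
def IsExtremePt {d : ℕ} (C : Set (Vd d)) (v : Vd d) : Prop :=
  v ∈ closure C ∧ v ≠ 0 ∧ ∀ a ∈ closure C, ∀ b ∈ closure C,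
    ∀ s t : ℝ, 0 < s → 0 < t → v = s • a + t • b → ∃ c : ℝ, a = c • b


/-- The quotient topology on the projective space `P(V)`. -/
instance projTopology {K V : Type*} [DivisionRing K] [AddCommGroup V] [Module K V]
    [TopologicalSpace V] : TopologicalSpace (Projectivization K V) :=
  inferInstanceAs (TopologicalSpace (Quotient (projectivizationSetoid K V)))

/-- The set of projective points with a representative in `A`. -/
def projSet {d : ℕ} (A : Set (Vd d)) : Set (Projectivization ℝ (Vd d)) :=
  {x | ∃ (v : Vd d) (hv : v ≠ 0), v ∈ A ∧ x = Projectivization.mk ℝ v hv}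

/-- The action of `γ ∈ GL(d,ℝ)` on the projective space `P(ℝ^d)`. -/
def pAct {d : ℕ} (γ : GL (Fin d) ℝ) : Projectivization ℝ (Vd d) → Projectivization ℝ (Vd d) :=
  Projectivization.map (Matrix.toLin' (↑γ : Md d)) (by
    have : Function.LeftInverse (Matrix.toLin' (↑γ⁻¹ : Md d)) (Matrix.toLin' (↑γ : Md d)) := by
      intro v
      simp only [Matrix.toLin'_apply, Matrix.mulVec_mulVec]
      rw [Matrix.coe_units_inv, Matrix.nonsing_inv_mul _ ((Matrix.isUnit_iff_isUnit_det _).mp γ.isUnit), Matrix.one_mulVec]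
    exact this.injective)

/-- `T` lies in the closure of `Λ` in `P(End(ℝ^d))`. -/
def InEndClosure {d : ℕ} (Λ : Set (Md d)) (T : Md d) : Prop :=
  T ≠ 0 ∧ ∃ (g : ℕ → Md d) (c : ℕ → ℝ), (∀ n, g n ∈ Λ) ∧
    Tendsto (fun n => c n • g n) atTop (nhds T)


section AuxSpectral
open Polynomial

lemma eval_charpoly_det {n : Type*} [DecidableEq n] [Fintype n] {R : Type*} [CommRing R]
    (M : Matrix n n R) (z : R) : M.charpoly.eval z = (z • (1 : Matrix n n R) - M).det := by
  have h : M.charpoly.eval z = ((charmatrix M).map (Polynomial.evalRingHom z)).det := by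
    rw [Matrix.charpoly,
      show (charmatrix M).map (Polynomial.evalRingHom z)
        = (Polynomial.evalRingHom z).mapMatrix (charmatrix M) from rfl, ← RingHom.map_det]
    rfl
  rw [h]; congr 1; ext i j
  by_cases hij : i = j <;>
    simp [Matrix.map_apply, charmatrix_apply, Matrix.sub_apply, Matrix.smul_apply,
      Matrix.one_apply, Matrix.diagonal_apply, hij, smul_eq_mul]

lemma real_eig_mem {d : ℕ} (g : Md d) {μ : ℝ} {v : Vd d} (hv : v ≠ 0)
    (hgv : g.mulVec v = μ • v) : |μ| ∈ eigMods g := by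
  have hdet : (μ • (1 : Md d) - g).det = 0 := by
    rw [← Matrix.exists_mulVec_eq_zero_iff]
    refine ⟨v, hv, ?_⟩
    simp [Matrix.sub_mulVec, Matrix.smul_mulVec, Matrix.one_mulVec, hgv]
  have hroot : g.charpoly.IsRoot μ := by
    rw [IsRoot, eval_charpoly_det]; exact hdet
  have hrootC : ((g.charpoly.map (algebraMap ℝ ℂ))).IsRoot (algebraMap ℝ ℂ μ) := hroot.map
  have hz : (algebraMap ℝ ℂ μ) ∈ (g.charpoly.map (algebraMap ℝ ℂ)).roots := by
    rw [Polynomial.mem_roots ((g.charpoly_monic.map (algebraMap ℝ ℂ)).ne_zero)]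
    exact hrootC
  have := Multiset.mem_map_of_mem (fun z => ‖z‖) hz
  simpa [eigMods, Complex.norm_real] using this

lemma eigMods_card {d : ℕ} (g : Md d) : Multiset.card (eigMods g) = d := by
  have hsp : Splits (g.charpoly.map (algebraMap ℝ ℂ)) := IsAlgClosed.splits _
  have h1 := hsp.natDegree_eq_card_roots.symm
  have h2 : g.charpoly.natDegree = d := by
    rw [Matrix.charpoly_natDegree_eq_dim, Fintype.card_fin]
  rw [eigMods, Multiset.card_map, h1, Polynomial.natDegree_map, h2]

lemma inv_root {d : ℕ} (γ : GL (Fin d) ℝ) {z : ℂ}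
    (hz : z ∈ (((↑γ : Md d)).charpoly.map (algebraMap ℝ ℂ)).roots) :
    z ≠ 0 ∧ ‖z‖⁻¹ ∈ eigMods (↑γ⁻¹ : Md d) := by
  set A : Matrix (Fin d) (Fin d) ℂ := ((↑γ : Md d)).map (algebraMap ℝ ℂ) with hA
  set B : Matrix (Fin d) (Fin d) ℂ := ((↑γ⁻¹ : Md d)).map (algebraMap ℝ ℂ) with hB
  have hmap1 : ((1 : Md d)).map (algebraMap ℝ ℂ) = 1 := Matrix.map_one _ (map_zero _) (map_one _)
  have hAB : A * B = 1 := by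
    rw [hA, hB, ← Matrix.map_mul, ← Units.val_mul, mul_inv_cancel]
    exact hmap1
  have hBA : B * A = 1 := by
    rw [hA, hB, ← Matrix.map_mul, ← Units.val_mul, inv_mul_cancel]
    exact hmap1
  have hdetA : A.det ≠ 0 := by
    intro h
    have : A.det * B.det = 1 := by rw [← Matrix.det_mul, hAB, Matrix.det_one]
    rw [h, zero_mul] at this
    exact zero_ne_one this
  have hrootA : A.charpoly.IsRoot z := by
    have := (Polynomial.mem_roots'.mp hz).2
    rwa [← Matrix.charpoly_map] at this
  have hz0 : z ≠ 0 := by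
    intro h
    rw [h, IsRoot, eval_charpoly_det, zero_smul, zero_sub, Matrix.det_neg] at hrootA
    rcases mul_eq_zero.mp hrootA with h' | h'
    · exact pow_ne_zero _ (neg_ne_zero.mpr one_ne_zero) h'
    · exact hdetA h'
  have hdet0 : (z • (1 : Matrix (Fin d) (Fin d) ℂ) - A).det = 0 := by
    rw [← eval_charpoly_det]; exact hrootA
  have key : z⁻¹ • (1 : Matrix (Fin d) (Fin d) ℂ) - B
      = B * ((-z⁻¹) • (z • (1 : Matrix (Fin d) (Fin d) ℂ) - A)) := by
    rw [Matrix.mul_smul, Matrix.mul_sub, Matrix.mul_smul, hBA, Matrix.mul_one]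
    rw [smul_sub, smul_smul, neg_mul, inv_mul_cancel₀ hz0]
    module
  have hrootB : B.charpoly.IsRoot z⁻¹ := by
    rw [IsRoot, eval_charpoly_det, key, Matrix.det_mul, Matrix.det_smul, hdet0,
      mul_zero, mul_zero]
  have hzB : z⁻¹ ∈ (((↑γ⁻¹ : Md d)).charpoly.map (algebraMap ℝ ℂ)).roots := by
    rw [Polynomial.mem_roots ((((↑γ⁻¹ : Md d)).charpoly_monic.map (algebraMap ℝ ℂ)).ne_zero)]
    rw [← Matrix.charpoly_map]; exact hrootB
  refine ⟨hz0, ?_⟩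
  have := Multiset.mem_map_of_mem (fun z => ‖z‖) hzB
  simpa [eigMods, map_inv₀] using this

end AuxSpectral

section AuxCone

open scoped Classical in
lemma nonparallel {d : ℕ} (hd : 2 ≤ d) (γ : GL (Fin d) ℝ)
    (hp : IsProximal (↑γ : Md d)) (hp' : IsProximal (↑γ⁻¹ : Md d))
    {vP vM : Vd d} (hvP0 : vP ≠ 0) (hvM0 : vM ≠ 0)
    (hlP : IsTopEigenline (↑γ : Md d) (ℝ ∙ vP))
    (hlM : IsTopEigenline (↑γ⁻¹ : Md d) (ℝ ∙ vM))
    (e : ℝ) : vP ≠ e • vM := by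
  intro hPM
  obtain ⟨μ, hμmax, hμeq, -⟩ := hlP
  obtain ⟨ν, hνmax, hνeq, -⟩ := hlM
  have hgP : (↑γ : Md d).mulVec vP = μ • vP := by
    have h1 : vP ∈ Module.End.eigenspace (Matrix.toLin' (↑γ : Md d)) μ := by
      rw [← hμeq]; exact Submodule.mem_span_singleton_self vP
    have := Module.End.mem_eigenspace_iff.mp h1
    rwa [Matrix.toLin'_apply] at this
  have hgiM : (↑γ⁻¹ : Md d).mulVec vM = ν • vM := by
    have h1 : vM ∈ Module.End.eigenspace (Matrix.toLin' (↑γ⁻¹ : Md d)) ν := by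
      rw [← hνeq]; exact Submodule.mem_span_singleton_self vM
    have := Module.End.mem_eigenspace_iff.mp h1
    rwa [Matrix.toLin'_apply] at this
  have hgiP : (↑γ⁻¹ : Md d).mulVec vP = ν • vP := by
    rw [hPM, Matrix.mulVec_smul, hgiM, smul_comm]
  have hgg : (↑γ : Md d) * (↑γ⁻¹ : Md d) = 1 := by
    rw [← Units.val_mul, mul_inv_cancel]; rfl
  have hνμ : ν * μ = 1 := by
    have h1 : (↑γ : Md d).mulVec ((↑γ⁻¹ : Md d).mulVec vP) = vP := by
      rw [Matrix.mulVec_mulVec, hgg, Matrix.one_mulVec]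
    rw [hgiP, Matrix.mulVec_smul, hgP, smul_smul] at h1
    by_contra h
    have h2 : (ν * μ - 1) • vP = 0 := by rw [sub_smul, one_smul, h1, sub_self]
    rcases smul_eq_zero.mp h2 with h3 | h3
    · exact h (by linarith [sub_eq_zero.mp h3])
    · exact hvP0 h3
  have hμ0 : μ ≠ 0 := fun h => by simp [h] at hνμ
  have hν0 : ν ≠ 0 := fun h => by simp [h] at hνμ
  have hνinv : ν = μ⁻¹ := by field_simp; linarith [hνμ]
  have hμmem : |μ| ∈ eigMods (↑γ : Md d) := real_eig_mem _ hvP0 hgP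
  obtain ⟨r, hrmem, hrcount, hrmax⟩ := hp
  have hrμ : r = |μ| := le_antisymm (hμmax r hrmem) (hrmax _ hμmem)
  have hcount : (eigMods (↑γ : Md d)).count |μ| = 1 := hrμ ▸ hrcount
  have hcard : Multiset.card (eigMods (↑γ : Md d)) = d := eigMods_card _
  have hex : ∃ s ∈ eigMods (↑γ : Md d), s ≠ |μ| := by
    by_contra h
    push_neg at h
    have : (eigMods (↑γ : Md d)).count |μ| = Multiset.card (eigMods (↑γ : Md d)) :=
      Multiset.count_eq_card.mpr (fun b hb => (h b hb).symm)
    rw [hcount, hcard] at this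
    omega
  obtain ⟨s, hsmem, hsne⟩ := hex
  have hslt : s < |μ| := lt_of_le_of_ne (hμmax s hsmem) hsne
  obtain ⟨z, hzmem, hzabs⟩ := Multiset.mem_map.mp hsmem
  obtain ⟨hz0, hzinv⟩ := inv_root γ hzmem
  have habs : (0:ℝ) < ‖z‖ := by
    simpa using (norm_pos_iff.mpr hz0)
  have hbound : ‖z‖⁻¹ ≤ |ν| := hνmax _ hzinv
  rw [hνinv, abs_inv] at hbound
  have : |μ|⁻¹ < ‖z‖⁻¹ := by
    apply inv_strictAnti₀ habs
    rw [hzabs]; exact hslt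
  linarith

lemma zero_notmem_cone {d : ℕ} {C : Set (Vd d)} (hC : IsProperCone C) {v0 : Vd d}
    (hv0 : v0 ≠ 0) : (0 : Vd d) ∉ C := by
  intro h0
  obtain ⟨ho, -, -, -, hsal⟩ := hC
  obtain ⟨ε, hε, hball⟩ := Metric.isOpen_iff.mp ho 0 h0
  have hn : (0:ℝ) < ‖v0‖ := norm_pos_iff.mpr hv0
  set t : ℝ := ε / (2 * ‖v0‖) with htdef
  have ht : 0 < t := by positivity
  set u := t • v0 with hu
  have hu0 : u ≠ 0 := smul_ne_zero ht.ne' hv0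
  have hun : ‖u‖ < ε := by
    rw [hu, norm_smul, Real.norm_eq_abs, abs_of_pos ht, htdef]
    have heq : ε / (2 * ‖v0‖) * ‖v0‖ = ε / 2 := by field_simp
    rw [heq]; linarith
  have humem : u ∈ C := hball (by simpa [Metric.mem_ball, dist_zero_right] using hun)
  have hnumem : -u ∈ C := hball (by simpa [Metric.mem_ball, dist_zero_right] using hun)
  exact hu0 (hsal u (subset_closure humem) (subset_closure hnumem))

lemma smul_mem_closure_cone {d : ℕ} {C : Set (Vd d)} (hC : IsProperCone C) {v : Vd d}
    (hv : v ∈ closure C) {t : ℝ} (ht : 0 < t) : t • v ∈ closure C :=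
  map_mem_closure (continuous_const_smul t) hv (fun u hu => hC.2.2.2.1 u hu t ht)

lemma cont_mulVec {d : ℕ} (g : Md d) : Continuous fun v : Vd d => g.mulVec v := by
  have := LinearMap.continuous_of_finiteDimensional (Matrix.mulVecLin g)
  exact this

lemma mulVec_mem_closure_cone {d : ℕ} {C : Set (Vd d)} {g : Md d}
    (hmt : Set.MapsTo (fun v => g.mulVec v) C C) {v : Vd d} (hv : v ∈ closure C) :
    g.mulVec v ∈ closure C :=
  map_mem_closure (cont_mulVec g) hv hmt

lemma continuous_mulVec_pair {d : ℕ} :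
    Continuous fun p : Md d × Vd d => p.1.mulVec p.2 := by
  refine continuous_pi fun i => ?_
  simp only [Matrix.mulVec, dotProduct]
  refine continuous_finset_sum _ fun j _ => Continuous.mul ?_ ?_
  · exact (continuous_apply j).comp ((continuous_apply i).comp continuous_fst)
  · exact (continuous_apply j).comp continuous_snd

lemma continuous_pmk {d : ℕ} :
    Continuous (fun v : {v : Vd d // v ≠ 0} => Projectivization.mk ℝ v.1 v.2) :=
  continuous_quotient_mk'

lemma isOpen_projPreimage {d : ℕ} {U : Set (Projectivization ℝ (Vd d))} (hU : IsOpen U) :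
    IsOpen {w : Vd d | ∃ h : w ≠ 0, Projectivization.mk ℝ w h ∈ U} := by
  have h1 : IsOpen {v : Vd d | v ≠ 0} := isOpen_compl_singleton
  have h3 : IsOpen ((fun v : {v : Vd d // v ≠ 0} => Projectivization.mk ℝ v.1 v.2) ⁻¹' U) :=
    hU.preimage continuous_pmk
  have h4 := h1.isOpenMap_subtype_val _ h3
  convert h4 using 1
  ext w
  constructor
  · rintro ⟨h, hmem⟩
    exact ⟨⟨w, h⟩, hmem, rfl⟩
  · rintro ⟨⟨w', h'⟩, hmem, rfl⟩
    exact ⟨h', hmem⟩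

lemma mem_closure_projSet {d : ℕ} {C : Set (Vd d)} (h0 : (0 : Vd d) ∉ C)
    {v : Vd d} (hv : v ∈ closure C) (hv0 : v ≠ 0) :
    Projectivization.mk ℝ v hv0 ∈ closure (projSet C) := by
  obtain ⟨u, hu, hlim⟩ := mem_closure_iff_seq_limit.mp hv
  have hu0 : ∀ k, u k ≠ 0 := fun k h => h0 (h ▸ hu k)
  have hsub : Tendsto (fun k => (⟨u k, hu0 k⟩ : {w : Vd d // w ≠ 0})) atTop
      (nhds ⟨v, hv0⟩) := by
    rw [tendsto_subtype_rng]; exact hlim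
  have hten := (continuous_pmk.tendsto _).comp hsub
  refine mem_closure_of_tendsto hten (Filter.Eventually.of_forall fun k => ?_)
  exact ⟨u k, hu0 k, hu k, rfl⟩

end AuxCone

section AuxRep

lemma norm_smul_unit {d : ℕ} {v : Vd d} (hv : v ≠ 0) : ‖(‖v‖⁻¹ • v)‖ = 1 := by
  have hn : (0:ℝ) < ‖v‖ := norm_pos_iff.mpr hv
  rw [norm_smul, norm_inv, norm_norm, inv_mul_cancel₀ hn.ne']

lemma mk_smul_eq {d : ℕ} {v : Vd d} (hv : v ≠ 0) {a : ℝ} (ha : a ≠ 0)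
    (hav : a • v ≠ 0) : Projectivization.mk ℝ (a • v) hav = Projectivization.mk ℝ v hv := by
  rw [Projectivization.mk_eq_mk_iff]
  exact ⟨Units.mk0 a ha, rfl⟩

lemma mk_eq_of_parallel {d : ℕ} {v w : Vd d} (hv : v ≠ 0) (hw : w ≠ 0) {a : ℝ}
    (ha : a ≠ 0) (h : w = a • v) : Projectivization.mk ℝ w hw = Projectivization.mk ℝ v hv := by
  rw [Projectivization.mk_eq_mk_iff]
  exact ⟨Units.mk0 a ha, h.symm⟩

lemma closure_projSet_rep {d : ℕ} {C : Set (Vd d)} (hC : IsProperCone C)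
    (h0 : (0 : Vd d) ∉ C) {x : Projectivization ℝ (Vd d)} (hx : x ∈ closure (projSet C)) :
    ∃ (v : Vd d) (hv : v ≠ 0), ‖v‖ = 1 ∧ v ∈ closure C ∧ x = Projectivization.mk ℝ v hv := by
  set PC : Set (Projectivization ℝ (Vd d)) :=
    {y | ∃ (v : Vd d) (hv : v ≠ 0), ‖v‖ = 1 ∧ v ∈ closure C ∧ y = Projectivization.mk ℝ v hv}
    with hPC
  suffices h : closure (projSet C) ⊆ PC from h hx
  apply closure_minimal
  · rintro y ⟨v, hv, hvC, rfl⟩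
    have hn : (0:ℝ) < ‖v‖ := norm_pos_iff.mpr hv
    have hnv : ‖v‖⁻¹ • v ≠ 0 := smul_ne_zero (by positivity) hv
    exact ⟨‖v‖⁻¹ • v, hnv, norm_smul_unit hv,
      subset_closure (hC.2.2.2.1 v hvC _ (by positivity)),
      (mk_smul_eq hv (by positivity) hnv).symm⟩
  · -- PC is closed
    rw [← isOpen_compl_iff]
    rw [isOpen_iff_mem_nhds]
    intro x hxc
    have hu0 : x.rep ≠ 0 := Projectivization.rep_nonzero x
    have hn : (0:ℝ) < ‖x.rep‖ := norm_pos_iff.mpr hu0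
    set u : Vd d := ‖x.rep‖⁻¹ • x.rep with hudef
    have hu : u ≠ 0 := smul_ne_zero (by positivity) hu0
    have hun : ‖u‖ = 1 := norm_smul_unit hu0
    have hxu : x = Projectivization.mk ℝ u hu := by
      have h1 : Projectivization.mk ℝ u hu = Projectivization.mk ℝ x.rep hu0 :=
        mk_eq_of_parallel hu0 hu (a := ‖x.rep‖⁻¹) (by positivity) hudef
      rw [h1, Projectivization.mk_rep]
    have hucl : u ∉ closure C := fun h => hxc ⟨u, hu, hun, h, hxu⟩
    have hnu : -u ≠ 0 := neg_ne_zero.mpr hu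
    have hnucl : -u ∉ closure C := by
      intro h
      refine hxc ⟨-u, hnu, by rw [norm_neg]; exact hun, h, ?_⟩
      have h1 : Projectivization.mk ℝ (-u) hnu = Projectivization.mk ℝ u hu :=
        mk_eq_of_parallel hu hnu (a := (-1:ℝ)) (by norm_num) (by rw [neg_one_smul])
      rw [h1]; exact hxu
    obtain ⟨ε₁, hε₁, hball₁⟩ := Metric.isOpen_iff.mp isClosed_closure.isOpen_compl u hucl
    obtain ⟨ε₂, hε₂, hball₂⟩ := Metric.isOpen_iff.mp isClosed_closure.isOpen_compl (-u) hnucl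
    set ε := min ε₁ ε₂ with hεdef
    have hε : 0 < ε := lt_min hε₁ hε₂
    have hBu : Metric.ball u ε ∩ closure C = ∅ := by
      rw [Set.eq_empty_iff_forall_notMem]
      rintro w ⟨hw1, hw2⟩
      exact (hball₁ (Metric.ball_subset_ball (min_le_left _ _) hw1)) hw2
    have hBnu : Metric.ball (-u) ε ∩ closure C = ∅ := by
      rw [Set.eq_empty_iff_forall_notMem]
      rintro w ⟨hw1, hw2⟩
      exact (hball₂ (Metric.ball_subset_ball (min_le_right _ _) hw1)) hw2
    set V' : Set {v : Vd d // v ≠ 0} :=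
      {v | ‖(v : Vd d)‖⁻¹ • (v : Vd d) ∈ Metric.ball u ε ∪ Metric.ball (-u) ε} with hV'
    have hnorm_cont : Continuous fun v : {v : Vd d // v ≠ 0} =>
        ‖(v : Vd d)‖⁻¹ • (v : Vd d) := by
      refine Continuous.smul (Continuous.inv₀ continuous_subtype_val.norm ?_)
        continuous_subtype_val
      exact fun v => norm_ne_zero_iff.mpr v.2
    have hV'open : IsOpen V' :=
      ((Metric.isOpen_ball.union Metric.isOpen_ball)).preimage hnorm_cont
    -- symmetric under normalization change
    have hsymm : ∀ y : Vd d, y ∈ Metric.ball u ε ∪ Metric.ball (-u) ε →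
        -y ∈ Metric.ball u ε ∪ Metric.ball (-u) ε := by
      rintro y (hy | hy)
      · right
        rw [Metric.mem_ball] at hy ⊢
        rwa [dist_neg_neg]
      · left
        rw [Metric.mem_ball] at hy ⊢
        rwa [← neg_neg u, dist_neg_neg]
    -- normalization of a nonzero multiple
    have hnormmul : ∀ (w : Vd d) (hw : w ≠ 0) (a : ℝ) (ha : a ≠ 0),
        ‖a • w‖⁻¹ • (a • w) = ‖w‖⁻¹ • w ∨ ‖a • w‖⁻¹ • (a • w) = -(‖w‖⁻¹ • w) := by
      intro w hw a ha
      have hwn : (0:ℝ) < ‖w‖ := norm_pos_iff.mpr hw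
      rcases lt_or_gt_of_ne ha with hneg | hpos
      · right
        rw [norm_smul, Real.norm_eq_abs, abs_of_neg hneg, smul_smul]
        have : (-a * ‖w‖)⁻¹ * a = -‖w‖⁻¹ := by field_simp
        rw [this, neg_smul]
      · left
        rw [norm_smul, Real.norm_eq_abs, abs_of_pos hpos, smul_smul]
        have : (a * ‖w‖)⁻¹ * a = ‖w‖⁻¹ := by field_simp
        rw [this]
    set W := (fun v : {v : Vd d // v ≠ 0} => Projectivization.mk ℝ v.1 v.2) '' V' with hW
    have hsat : (fun v : {v : Vd d // v ≠ 0} => Projectivization.mk ℝ v.1 v.2) ⁻¹' W = V' := by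
      apply Set.Subset.antisymm
      · rintro w hw
        obtain ⟨v, hvV, heq⟩ := hw
        obtain ⟨a, hav⟩ := (Projectivization.mk_eq_mk_iff ℝ _ _ v.2 w.2).mp heq
        have ha0 : (a : ℝ) ≠ 0 := a.ne_zero
        have hv1 : v.1 = (a : ℝ) • w.1 := by exact_mod_cast hav.symm
        have hmem : ‖(v:Vd d)‖⁻¹ • (v:Vd d) ∈ Metric.ball u ε ∪ Metric.ball (-u) ε := hvV
        rw [hv1] at hmem
        rcases hnormmul w.1 w.2 a ha0 with h | h
        · rw [h] at hmem; exact hmem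
        · rw [h] at hmem
          have := hsymm _ hmem
          rw [neg_neg] at this
          exact this
      · exact Set.subset_preimage_image _ _
    have hWopen : IsOpen W := by
      refine (isQuotientMap_quotient_mk' (s := projectivizationSetoid ℝ (Vd d))).isOpen_preimage.mp ?_
      show IsOpen ((fun v : {v : Vd d // v ≠ 0} => Projectivization.mk ℝ v.1 v.2) ⁻¹' W)
      rw [hsat]; exact hV'open
    have hxW : x ∈ W := by
      have hmemV : (⟨u, hu⟩ : {v : Vd d // v ≠ 0}) ∈ V' := by
        show ‖u‖⁻¹ • u ∈ Metric.ball u ε ∪ Metric.ball (-u) ε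
        rw [hun, inv_one, one_smul]
        exact Or.inl (Metric.mem_ball_self hε)
      exact ⟨⟨u, hu⟩, hmemV, hxu.symm⟩
    have hWPC : W ⊆ PCᶜ := by
      rintro y ⟨v, hvV, rfl⟩ ⟨w, hw, hwn, hwcl, heq⟩
      obtain ⟨a, hav⟩ := (Projectivization.mk_eq_mk_iff ℝ _ _ v.2 hw).mp heq
      have ha0 : (a : ℝ) ≠ 0 := a.ne_zero
      have hv1 : v.1 = (a : ℝ) • w := by exact_mod_cast hav.symm
      have hmem : ‖(v:Vd d)‖⁻¹ • (v:Vd d) ∈ Metric.ball u ε ∪ Metric.ball (-u) ε := hvV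
      rw [hv1] at hmem
      have hwnorm : ‖w‖⁻¹ • w = w := by rw [hwn, inv_one, one_smul]
      have hwball : w ∈ Metric.ball u ε ∪ Metric.ball (-u) ε := by
        rcases hnormmul w hw a ha0 with h | h
        · rw [h, hwnorm] at hmem; exact hmem
        · rw [h, hwnorm] at hmem
          have := hsymm _ hmem
          rw [neg_neg] at this
          exact this
      rcases hwball with h | h
      · exact Set.eq_empty_iff_forall_notMem.mp hBu w ⟨h, hwcl⟩
      · exact Set.eq_empty_iff_forall_notMem.mp hBnu w ⟨h, hwcl⟩
    exact Filter.mem_of_superset (hWopen.mem_nhds hxW) hWPC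

end AuxRep

section AuxCore

lemma sat_smul_mem {d : ℕ} {U : Set (Projectivization ℝ (Vd d))} {a : ℝ} (ha : a ≠ 0)
    {w : Vd d} (h : ∃ h1 : a • w ≠ 0, Projectivization.mk ℝ (a • w) h1 ∈ U) :
    ∃ h2 : w ≠ 0, Projectivization.mk ℝ w h2 ∈ U := by
  obtain ⟨h1, hmem⟩ := h
  have hw : w ≠ 0 := fun hw => h1 (by rw [hw, smul_zero])
  refine ⟨hw, ?_⟩
  rwa [mk_eq_of_parallel hw h1 ha rfl] at hmem

set_option maxHeartbeats 2000000 in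
lemma core_attract {d : ℕ} {C : Set (Vd d)}
    (γ : GL (Fin d) ℝ) (T : Md d) {vP vM : Vd d} (hvP0 : vP ≠ 0) (hvM0 : vM ≠ 0)
    (hTim : ∀ w : Vd d, ∃ κ : ℝ, T.mulVec w = κ • vP)
    (hker : ∀ w : Vd d, w ≠ 0 → (w ∈ closure C ∨ -w ∈ closure C) → T.mulVec w = 0 →
      ∃ e : ℝ, w = e • vM)
    {c : ℕ → ℝ} (hconv : Tendsto (fun n => c n • (↑γ : Md d) ^ n) atTop (nhds T))
    (hc0 : ∀ᶠ n in atTop, c n ≠ 0)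
    {UA UB : Set (Projectivization ℝ (Vd d))} (hUA : IsOpen UA) (hUB : IsOpen UB)
    (hPA : Projectivization.mk ℝ vP hvP0 ∈ UA) (hMB : Projectivization.mk ℝ vM hvM0 ∈ UB)
    {N : ℕ → ℕ} (hN : Tendsto N atTop atTop)
    {v : ℕ → Vd d} (hv1 : ∀ k, ‖v k‖ = 1) (hvC : ∀ k, v k ∈ closure C)
    (hvB : ∀ k, ¬ ∃ h : v k ≠ 0, Projectivization.mk ℝ (v k) h ∈ UB) :
    ∃ k, ∃ h : (((↑γ : Md d)) ^ (N k)).mulVec (v k) ≠ 0,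
      Projectivization.mk ℝ _ h ∈ UA := by
  by_contra hcon
  push_neg at hcon
  set K := Metric.sphere (0 : Vd d) 1 ∩ closure C with hK
  have hKcomp : IsCompact K := (isCompact_sphere 0 1).inter_right isClosed_closure
  have hvK : ∀ k, v k ∈ K := fun k => ⟨mem_sphere_zero_iff_norm.mpr (hv1 k), hvC k⟩
  obtain ⟨vh, hvhK, φ, hφ, hlim⟩ := hKcomp.tendsto_subseq hvK
  have hvh1 : ‖vh‖ = 1 := mem_sphere_zero_iff_norm.mp hvhK.1
  have hvh0 : vh ≠ 0 := by intro h; rw [h, norm_zero] at hvh1; exact one_ne_zero hvh1.symm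
  have hopenB := isOpen_projPreimage hUB
  have hopenA := isOpen_projPreimage hUA
  have hvhB : ¬ ∃ h : vh ≠ 0, Projectivization.mk ℝ vh h ∈ UB := by
    intro hmem
    have hmemS : vh ∈ {w : Vd d | ∃ h : w ≠ 0, Projectivization.mk ℝ w h ∈ UB} := hmem
    have hev := hlim.eventually (hopenB.eventually_mem hmemS)
    obtain ⟨k, hk⟩ := hev.exists
    exact hvB (φ k) hk
  have hTvh : T.mulVec vh ≠ 0 := by
    intro h
    obtain ⟨e, he⟩ := hker vh hvh0 (Or.inl hvhK.2) h
    have he0 : e ≠ 0 := by rintro rfl; rw [zero_smul] at he; exact hvh0 he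
    refine hvhB ⟨hvh0, ?_⟩
    rw [mk_eq_of_parallel hvM0 hvh0 he0 he]
    exact hMB
  obtain ⟨κ, hκ⟩ := hTim vh
  have hκ0 : κ ≠ 0 := by rintro rfl; rw [zero_smul] at hκ; exact hTvh hκ
  have hTmem : T.mulVec vh ∈ {w : Vd d | ∃ h : w ≠ 0, Projectivization.mk ℝ w h ∈ UA} := by
    refine ⟨hTvh, ?_⟩
    rw [mk_eq_of_parallel hvP0 hTvh hκ0 hκ]
    exact hPA
  have hMten : Tendsto (fun k => c (N (φ k)) • (↑γ : Md d) ^ (N (φ k))) atTop (nhds T) :=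
    hconv.comp (hN.comp hφ.tendsto_atTop)
  have hpair : Tendsto (fun k => ((c (N (φ k)) • (↑γ : Md d) ^ (N (φ k)) : Md d), v (φ k)))
      atTop (nhds (T, vh)) := hMten.prodMk_nhds hlim
  have happ : Tendsto (fun k => (c (N (φ k)) • (↑γ : Md d) ^ (N (φ k))).mulVec (v (φ k)))
      atTop (nhds (T.mulVec vh)) :=
    (continuous_mulVec_pair.tendsto (T, vh)).comp hpair
  have hev1 := happ.eventually (hopenA.eventually_mem hTmem)
  have hev2 : ∀ᶠ k in atTop, c (N (φ k)) ≠ 0 := (hN.comp hφ.tendsto_atTop).eventually hc0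
  obtain ⟨k, h1, h2⟩ := (hev1.and hev2).exists
  rw [Matrix.smul_mulVec] at h1
  obtain ⟨h3, h4⟩ := sat_smul_mem h2 h1
  exact hcon (φ k) h3 h4

end AuxCore

section AuxAct

lemma mk_congr {d : ℕ} {v w : Vd d} (h : v = w) (hv : v ≠ 0) :
    Projectivization.mk ℝ v hv = Projectivization.mk ℝ w (h ▸ hv) := by subst h; rfl

lemma pAct_mk {d : ℕ} (γ' : GL (Fin d) ℝ) {w : Vd d} (hw : w ≠ 0)
    (h2 : ((↑γ' : Md d)).mulVec w ≠ 0) :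
    pAct γ' (Projectivization.mk ℝ w hw) = Projectivization.mk ℝ _ h2 := by
  unfold pAct
  rw [Projectivization.map_mk]
  exact mk_congr (Matrix.toLin'_apply _ _) _

lemma pow_mulVec_ne_zero {d : ℕ} (γ' : GL (Fin d) ℝ) (n : ℕ) {w : Vd d} (hw : w ≠ 0) :
    (((↑γ' : Md d)) ^ n).mulVec w ≠ 0 := by
  intro h
  have hdet : (((↑γ' : Md d)) ^ n).det ≠ 0 := by
    rw [Matrix.det_pow]
    exact pow_ne_zero _ (((Matrix.isUnit_iff_isUnit_det _).mp γ'.isUnit).ne_zero)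
  exact hdet (Matrix.exists_mulVec_eq_zero_iff.mp ⟨w, hw, h⟩)

lemma pAct_pow_mk {d : ℕ} (γ' : GL (Fin d) ℝ) (n : ℕ) {w : Vd d} (hw : w ≠ 0) :
    pAct (γ' ^ n) (Projectivization.mk ℝ w hw)
      = Projectivization.mk ℝ ((((↑γ' : Md d)) ^ n).mulVec w) (pow_mulVec_ne_zero γ' n hw) := by
  have h2 : ((↑(γ' ^ n) : Md d)).mulVec w ≠ 0 := by
    rw [Units.val_pow_eq_pow_val]; exact pow_mulVec_ne_zero γ' n hw
  rw [pAct_mk (γ' ^ n) hw h2]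
  exact mk_congr (by rw [Units.val_pow_eq_pow_val]) _

lemma pow_mul_inv_pow {d : ℕ} (γ' : GL (Fin d) ℝ) (n : ℕ) :
    ((↑γ' : Md d) ^ n) * ((↑γ'⁻¹ : Md d) ^ n) = 1 := by
  rw [← Units.val_pow_eq_pow_val, ← Units.val_pow_eq_pow_val, ← Units.val_mul, inv_pow,
    mul_inv_cancel]
  rfl

lemma inv_mul_mat {d : ℕ} (γ' : GL (Fin d) ℝ) :
    ((↑γ'⁻¹ : Md d)) * ((↑γ' : Md d)) = 1 := by
  rw [← Units.val_mul, inv_mul_cancel]; rfl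

lemma pow_mulVec_closure {d : ℕ} {C : Set (Vd d)} {g : Md d}
    (hmt : Set.MapsTo (fun v => g.mulVec v) C C) (n : ℕ) {v : Vd d} (hv : v ∈ closure C) :
    (g ^ n).mulVec v ∈ closure C := by
  induction n with
  | zero => simpa [Matrix.one_mulVec] using hv
  | succ n ih =>
      rw [pow_succ', ← Matrix.mulVec_mulVec]
      exact mulVec_mem_closure_cone hmt ih

end AuxAct

set_option maxHeartbeats 2000000 in
/-- a bi-proximal automorphism `γ` of a properly convex domain whose
limit endomorphism `T_γ = lim γ^n` has projectivized kernel meeting `closure Ω` only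
in `ℓ⁻_γ` has north-south dynamics on `closure Ω`. -/
theorem stmt12 {d : ℕ} (C : Set (Vd d)) (hC : IsProperCone C) (γ : GL (Fin d) ℝ)
    (hγ : ConeAut C (↑γ : Md d)) (hp : IsProximal (↑γ : Md d)) (hp' : IsProximal (↑γ⁻¹ : Md d))
    (vP vM : Vd d) (hvP0 : vP ≠ 0) (hvM0 : vM ≠ 0)
    (hvPc : vP ∈ closure C) (hvMc : vM ∈ closure C)
    (hlP : IsTopEigenline (↑γ : Md d) (ℝ ∙ vP))
    (hlM : IsTopEigenline (↑γ⁻¹ : Md d) (ℝ ∙ vM))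
    (T : Md d) (hT0 : T ≠ 0) (c : ℕ → ℝ)
    (hconv : Tendsto (fun n => c n • (↑γ : Md d) ^ n) atTop (nhds T))
    (hker : ∀ w : Vd d, w ≠ 0 → (w ∈ closure C ∨ -w ∈ closure C) → T.mulVec w = 0 →
      ∃ e : ℝ, w = e • vM) :
    ∀ A B : Set (Projectivization ℝ (Vd d)),
      A ⊆ closure (projSet C) → B ⊆ closure (projSet C) →
      A ∈ nhdsWithin (Projectivization.mk ℝ vP hvP0) (closure (projSet C)) →
      B ∈ nhdsWithin (Projectivization.mk ℝ vM hvM0) (closure (projSet C)) →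
      ∃ N : ℕ, ∀ n ≥ N,
        (∀ x ∈ closure (projSet C) \ B, pAct (γ ^ n) x ∈ A) ∧
        (∀ x ∈ closure (projSet C) \ A, pAct (γ⁻¹ ^ n) x ∈ B) := by
  intro A B hAsub hBsub hAmem hBmem
  have h0C : (0 : Vd d) ∉ C := zero_notmem_cone hC hvP0
  have hPcl : Projectivization.mk ℝ vP hvP0 ∈ closure (projSet C) :=
    mem_closure_projSet h0C hvPc hvP0
  have hMcl : Projectivization.mk ℝ vM hvM0 ∈ closure (projSet C) :=
    mem_closure_projSet h0C hvMc hvM0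
  obtain ⟨UA, hUAo, hUAP, hUAsub⟩ := mem_nhdsWithin.mp hAmem
  obtain ⟨UB, hUBo, hUBM, hUBsub⟩ := mem_nhdsWithin.mp hBmem
  have hAin : Projectivization.mk ℝ vP hvP0 ∈ A := mem_of_mem_nhdsWithin hPcl hAmem
  have hBin : Projectivization.mk ℝ vM hvM0 ∈ B := mem_of_mem_nhdsWithin hMcl hBmem
  have hmtγ : Set.MapsTo (fun v => ((↑γ : Md d)).mulVec v) C C := fun u hu => by
    rw [← hγ.2]; exact Set.mem_image_of_mem _ hu
  have hmtγi : Set.MapsTo (fun v => ((↑γ⁻¹ : Md d)).mulVec v) C C := by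
    intro u hu
    have hu' : u ∈ (fun v => ((↑γ : Md d)).mulVec v) '' C := by rw [hγ.2]; exact hu
    obtain ⟨w, hw, hwu⟩ := hu'
    show ((↑γ⁻¹ : Md d)).mulVec u ∈ C
    rw [← hwu]
    show ((↑γ⁻¹ : Md d)).mulVec (((↑γ : Md d)).mulVec w) ∈ C
    rw [Matrix.mulVec_mulVec, inv_mul_mat, Matrix.one_mulVec]
    exact hw
  rcases Nat.lt_or_ge d 2 with hd | hd
  · -- degenerate low-dimensional case
    have hd0 : d ≠ 0 := by
      rintro rfl; exact hvP0 (funext fun i => Fin.elim0 i)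
    have hd1 : d = 1 := by omega
    subst hd1
    have hvP00 : vP 0 ≠ 0 := by
      intro h
      apply hvP0
      funext i
      rw [Fin.eq_zero i, h]; rfl
    have hone : ∀ (w : Vd 1) (hw : w ≠ 0),
        Projectivization.mk ℝ w hw = Projectivization.mk ℝ vP hvP0 := by
      intro w hw
      have ha : w 0 / vP 0 ≠ 0 := by
        intro h
        apply hw
        funext i
        rw [Fin.eq_zero i]
        rcases div_eq_zero_iff.mp h with h' | h'
        · exact h'
        · exact absurd h' hvP00
      refine mk_eq_of_parallel hvP0 hw ha ?_
      funext i
      rw [Fin.eq_zero i]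
      show w 0 = (w 0 / vP 0) * vP 0
      field_simp
    have hBin' : Projectivization.mk ℝ vP hvP0 ∈ B := by
      rw [← hone vM hvM0]; exact hBin
    refine ⟨0, fun n _ => ⟨?_, ?_⟩⟩
    · rintro x ⟨hxcl, -⟩
      obtain ⟨w, hw, -, -, rfl⟩ := closure_projSet_rep hC h0C hxcl
      rw [pAct_pow_mk γ n hw, hone]
      exact hAin
    · rintro x ⟨hxcl, -⟩
      obtain ⟨w, hw, -, -, rfl⟩ := closure_projSet_rep hC h0C hxcl
      rw [pAct_pow_mk γ⁻¹ n hw, hone]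
      exact hBin'
  · -- main case : d ≥ 2
    obtain ⟨μ, hμmax, hμeq, hμrank⟩ := hlP
    have hlP' : IsTopEigenline (↑γ : Md d) (ℝ ∙ vP) := ⟨μ, hμmax, hμeq, hμrank⟩
    have hgP : ((↑γ : Md d)).mulVec vP = μ • vP := by
      have h1 : vP ∈ Module.End.eigenspace (Matrix.toLin' (↑γ : Md d)) μ := by
        rw [← hμeq]; exact Submodule.mem_span_singleton_self vP
      have := Module.End.mem_eigenspace_iff.mp h1
      rwa [Matrix.toLin'_apply] at this
    have hμ0 : μ ≠ 0 := by
      intro h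
      have h1 := pow_mulVec_ne_zero γ 1 hvP0
      rw [pow_one, hgP, h, zero_smul] at h1
      exact h1 rfl
    have hgpow : ∀ n : ℕ, (((↑γ : Md d)) ^ n).mulVec vP = μ ^ n • vP := by
      intro n
      induction n with
      | zero => simp [Matrix.one_mulVec]
      | succ n ih =>
          rw [pow_succ', ← Matrix.mulVec_mulVec, ih, Matrix.mulVec_smul, hgP, smul_smul,
            ← pow_succ]
    obtain ⟨i0, hi0⟩ := Function.ne_iff.mp hvP0
    have hi0' : vP i0 ≠ 0 := hi0
    have hmulVec : Tendsto (fun n => (c n • ((↑γ : Md d)) ^ n).mulVec vP) atTop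
        (nhds (T.mulVec vP)) :=
      (continuous_mulVec_pair.tendsto (T, vP)).comp (hconv.prodMk_nhds tendsto_const_nhds)
    have hsmulform : ∀ n : ℕ, (c n • ((↑γ : Md d)) ^ n).mulVec vP = (c n * μ ^ n) • vP := by
      intro n
      rw [Matrix.smul_mulVec, hgpow, smul_smul]
    set t : ℝ := T.mulVec vP i0 / vP i0 with htdef
    have hTvPlim : Tendsto (fun n => c n * μ ^ n) atTop (nhds t) := by
      have h1 : Tendsto (fun n => ((c n * μ ^ n) • vP) i0) atTop (nhds (T.mulVec vP i0)) := by
        have hc := (continuous_apply i0).tendsto (T.mulVec vP)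
        refine (hc.comp hmulVec).congr fun n => ?_
        show ((c n • ((↑γ : Md d)) ^ n).mulVec vP) i0 = ((c n * μ ^ n) • vP) i0
        rw [hsmulform n]
      have h2 : Tendsto (fun n => ((c n * μ ^ n) • vP) i0 / vP i0) atTop (nhds t) :=
        h1.div_const _
      refine h2.congr fun n => ?_
      show ((c n * μ ^ n) • vP) i0 / vP i0 = c n * μ ^ n
      rw [Pi.smul_apply, smul_eq_mul, mul_div_assoc, div_self hi0', mul_one]
    have hTvP : T.mulVec vP = t • vP := by
      have h1 : Tendsto (fun n => (c n * μ ^ n) • vP) atTop (nhds (t • vP)) :=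
        hTvPlim.smul_const vP
      have h2 : Tendsto (fun n => (c n * μ ^ n) • vP) atTop (nhds (T.mulVec vP)) :=
        hmulVec.congr fun n => hsmulform n
      exact tendsto_nhds_unique h2 h1
    have ht0 : t ≠ 0 := by
      intro h
      rw [h, zero_smul] at hTvP
      obtain ⟨e, he⟩ := hker vP hvP0 (Or.inl hvPc) hTvP
      exact nonparallel hd γ hp hp' hvP0 hvM0 hlP' hlM e he
    have hcne : ∀ᶠ n in atTop, c n * μ ^ n ≠ 0 := hTvPlim.eventually_ne ht0
    have hc0 : ∀ᶠ n in atTop, c n ≠ 0 := hcne.mono fun n hn => left_ne_zero_of_mul hn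
    have hshift : Tendsto (fun n => c (n + 1) * μ ^ (n + 1)) atTop (nhds t) :=
      hTvPlim.comp (tendsto_add_atTop_nat 1)
    have hev : ∀ᶠ n in atTop, c (n + 1) * μ ^ (n + 1) ≠ 0 := hshift.eventually_ne ht0
    have hγT : ((↑γ : Md d)) * T = μ • T := by
      have hEq : ∀ᶠ n in atTop, ((↑γ : Md d)) * (c n • ((↑γ : Md d)) ^ n)
          = ((c n * μ ^ n) * μ / (c (n + 1) * μ ^ (n + 1)))
            • (c (n + 1) • ((↑γ : Md d)) ^ (n + 1)) := by
        filter_upwards [hev] with n hn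
        have hc1 : c (n + 1) ≠ 0 := left_ne_zero_of_mul hn
        rw [Matrix.mul_smul, ← pow_succ', smul_smul]
        congr 1
        field_simp
        ring
      have hL : Tendsto (fun n => ((↑γ : Md d)) * (c n • ((↑γ : Md d)) ^ n)) atTop
          (nhds (((↑γ : Md d)) * T)) :=
        ((continuous_const.matrix_mul continuous_id).tendsto T).comp hconv
      have hR : Tendsto (fun n => ((c n * μ ^ n) * μ / (c (n + 1) * μ ^ (n + 1)))
          • (c (n + 1) • ((↑γ : Md d)) ^ (n + 1))) atTop (nhds (μ • T)) := by
        have hs : Tendsto (fun n => (c n * μ ^ n) * μ / (c (n + 1) * μ ^ (n + 1))) atTop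
            (nhds (t * μ / t)) := (hTvPlim.mul_const μ).div hshift ht0
        have hμval : t * μ / t = μ := by
          rw [mul_comm t μ, mul_div_assoc, div_self ht0, mul_one]
        rw [hμval] at hs
        exact hs.smul (hconv.comp (tendsto_add_atTop_nat 1))
      exact tendsto_nhds_unique (hL.congr' hEq) hR
    have hTim : ∀ w : Vd d, ∃ κ : ℝ, T.mulVec w = κ • vP := by
      intro w
      have h1 : ((↑γ : Md d)).mulVec (T.mulVec w) = μ • T.mulVec w := by
        rw [Matrix.mulVec_mulVec, hγT, Matrix.smul_mulVec]
      have h2 : T.mulVec w ∈ Module.End.eigenspace (Matrix.toLin' (↑γ : Md d)) μ :=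
        Module.End.mem_eigenspace_iff.mpr (by rw [Matrix.toLin'_apply]; exact h1)
      rw [← hμeq] at h2
      obtain ⟨a, ha⟩ := Submodule.mem_span_singleton.mp h2
      exact ⟨a, ha.symm⟩
    -- Claim 1
    have claim1 : ∃ N1 : ℕ, ∀ n ≥ N1, ∀ x ∈ closure (projSet C) \ B, pAct (γ ^ n) x ∈ A := by
      by_contra hcl
      push_neg at hcl
      choose n hn x hx hxA using hcl
      have hnten : Tendsto n atTop atTop := tendsto_atTop_mono hn tendsto_id
      have hrep := fun k => closure_projSet_rep hC h0C (hx k).1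
      choose v hv hv1 hvC hxv using hrep
      have hvB : ∀ k, ¬ ∃ h : v k ≠ 0, Projectivization.mk ℝ (v k) h ∈ UB := by
        rintro k ⟨h, hmem⟩
        apply (hx k).2
        apply hUBsub
        refine ⟨?_, (hx k).1⟩
        rwa [show Projectivization.mk ℝ (v k) h = x k from (hxv k).symm] at hmem
      obtain ⟨k, hnz, hmem⟩ :=
        core_attract γ T hvP0 hvM0 hTim hker hconv hc0 hUAo hUBo hUAP hUBM hnten hv1 hvC hvB
      apply hxA k
      rw [hxv k, pAct_pow_mk γ (n k) (hv k)]
      apply hUAsub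
      exact ⟨hmem, mem_closure_projSet h0C
        (pow_mulVec_closure hmtγ (n k) (hvC k)) (pow_mulVec_ne_zero γ (n k) (hv k))⟩
    -- Claim 2
    have claim2 : ∃ N2 : ℕ, ∀ n ≥ N2, ∀ x ∈ closure (projSet C) \ A,
        pAct (γ⁻¹ ^ n) x ∈ B := by
      by_contra hcl
      push_neg at hcl
      choose n hn x hx hxB using hcl
      have hnten : Tendsto n atTop atTop := tendsto_atTop_mono hn tendsto_id
      have hrep := fun k => closure_projSet_rep hC h0C (hx k).1
      choose u hu hu1 huC hxu using hrep
      set w : ℕ → Vd d := fun k => (((↑γ⁻¹ : Md d)) ^ (n k)).mulVec (u k) with hwdef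
      have hw0 : ∀ k, w k ≠ 0 := fun k => pow_mulVec_ne_zero γ⁻¹ (n k) (hu k)
      have hwcl : ∀ k, w k ∈ closure C := fun k => pow_mulVec_closure hmtγi (n k) (huC k)
      have hwn : ∀ k, (0:ℝ) < ‖w k‖ := fun k => norm_pos_iff.mpr (hw0 k)
      set v : ℕ → Vd d := fun k => ‖w k‖⁻¹ • w k with hvdef
      have hv0 : ∀ k, v k ≠ 0 := fun k => smul_ne_zero (inv_ne_zero (hwn k).ne') (hw0 k)
      have hv1 : ∀ k, ‖v k‖ = 1 := fun k => norm_smul_unit (hw0 k)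
      have hvC : ∀ k, v k ∈ closure C := fun k =>
        smul_mem_closure_cone hC (hwcl k) (inv_pos.mpr (hwn k))
      have hmkvw : ∀ k, Projectivization.mk ℝ (v k) (hv0 k)
          = Projectivization.mk ℝ (w k) (hw0 k) := fun k =>
        mk_eq_of_parallel (hw0 k) (hv0 k) (a := ‖w k‖⁻¹) (inv_ne_zero (hwn k).ne') rfl
      have hywk : ∀ k, pAct (γ⁻¹ ^ (n k)) (x k) = Projectivization.mk ℝ (w k) (hw0 k) := by
        intro k
        rw [hxu k, pAct_pow_mk γ⁻¹ (n k) (hu k)]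
      have hvB : ∀ k, ¬ ∃ h : v k ≠ 0, Projectivization.mk ℝ (v k) h ∈ UB := by
        rintro k ⟨h, hmem⟩
        apply hxB k
        rw [hywk k]
        apply hUBsub
        refine ⟨?_, mem_closure_projSet h0C (hwcl k) (hw0 k)⟩
        rwa [show Projectivization.mk ℝ (v k) h = Projectivization.mk ℝ (w k) (hw0 k)
          from hmkvw k] at hmem
      obtain ⟨k, hnz, hmem⟩ :=
        core_attract γ T hvP0 hvM0 hTim hker hconv hc0 hUAo hUBo hUAP hUBM hnten hv1 hvC hvB
      -- (γ^n k) (v k) is a positive multiple of u k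
      have hveq : (((↑γ : Md d)) ^ (n k)).mulVec (v k) = ‖w k‖⁻¹ • u k := by
        show (((↑γ : Md d)) ^ (n k)).mulVec (‖w k‖⁻¹ • w k) = ‖w k‖⁻¹ • u k
        rw [Matrix.mulVec_smul]
        congr 1
        show (((↑γ : Md d)) ^ (n k)).mulVec ((((↑γ⁻¹ : Md d)) ^ (n k)).mulVec (u k)) = u k
        rw [Matrix.mulVec_mulVec, pow_mul_inv_pow, Matrix.one_mulVec]
      have hxkA : x k ∈ A := by
        apply hUAsub
        refine ⟨?_, (hx k).1⟩
        have h1 : Projectivization.mk ℝ ((((↑γ : Md d)) ^ (n k)).mulVec (v k)) hnz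
            = Projectivization.mk ℝ (u k) (hu k) := by
          rw [mk_congr hveq hnz]
          exact mk_eq_of_parallel (hu k) _ (a := ‖w k‖⁻¹) (inv_ne_zero (hwn k).ne') rfl
        rw [h1] at hmem
        rwa [show Projectivization.mk ℝ (u k) (hu k) = x k from (hxu k).symm] at hmem
      exact (hx k).2 hxkA
    obtain ⟨N1, hN1⟩ := claim1
    obtain ⟨N2, hN2⟩ := claim2
    refine ⟨max N1 N2, fun n hn => ⟨?_, ?_⟩⟩
    · exact fun x hx => hN1 n (le_trans (le_max_left _ _) hn) x hx
    · exact fun x hx => hN2 n (le_trans (le_max_right _ _) hn) x hx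


end
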